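/- For every map R : X → X and every ε > 0, the map x ↦ εx + (1 + ε)Rx is nonexpansive if and only if R is weakly contractive with constant 2ε/(1 + ε), i.e., ‖Rx − Ry‖² ≤ ‖x − y‖² − (2ε/(1 + ε))(‖x − y‖² + ⟨x − y, Rx − Ry⟩) for all x, y ∈ X. -/

import Mathlib

open RealInnerProductSpace Filter

variable {X : Type*} [NormedAddCommGroup X] [InnerProductSpace ℝ X] [CompleteSpace X]

/-- `T` is nonexpansive. -/
def Nonexpansive (T : X → X) : Prop := ∀ x y : X, ‖T x - T y‖ ≤ ‖x - y‖

/-- `T` is firmly nonexpansive. -/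
def FirmlyNonexpansive (T : X → X) : Prop :=
  ∀ x y : X, ‖T x - T y‖ ^ 2 ≤ ⟪x - y, T x - T y⟫

/-- `‖T₁ - T₂‖ₙ = sup_{‖x‖ ≤ n} ‖T₁ x - T₂ x‖`. -/
noncomputable def ballSup (T₁ T₂ : X → X) (n : ℕ) : ℝ :=
  sSup {r : ℝ | ∃ x : X, ‖x‖ ≤ (n : ℝ) ∧ r = ‖T₁ x - T₂ x‖}

/-- The metric `ρ` on nonexpansive maps. -/
noncomputable def rho (T₁ T₂ : X → X) : ℝ :=
  ∑' n : ℕ, (1 / 2 ^ (n + 1)) *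
    (ballSup T₁ T₂ (n + 1) / (1 + ballSup T₁ T₂ (n + 1)))

/-- The metric `ρ̂` on firmly nonexpansive maps: `ρ̂(T₁,T₂) = ρ(2T₁ - Id, 2T₂ - Id)`. -/
noncomputable def rhoHat (T₁ T₂ : X → X) : ℝ :=
  rho (fun x => (2 : ℝ) • T₁ x - x) (fun x => (2 : ℝ) • T₂ x - x)

/-- `T` is super-regular with limit point `xT`. -/
def SuperRegularAt (T : X → X) (xT : X) : Prop :=
  ∀ s : ℝ, 0 < s → ∀ ε : ℝ, 0 < ε → ∃ N : ℕ, ∀ n ≥ N, ∀ x : X, ‖x‖ ≤ s → ‖T^[n] x - xT‖ < ε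

/-- `T` is super-regular. -/
def SuperRegular (T : X → X) : Prop := ∃ xT : X, SuperRegularAt T xT

/-- `T` is a (Banach) contraction. -/
def Contraction (T : X → X) : Prop :=
  ∃ l : ℝ, 0 ≤ l ∧ l < 1 ∧ ∀ x y : X, ‖T x - T y‖ ≤ l * ‖x - y‖


lemma key_aux {X : Type*} [NormedAddCommGroup X] [InnerProductSpace ℝ X]
    (ε : ℝ) (hε : 0 < ε) (u v : X) :
    ‖ε • u + (1 + ε) • v‖ ≤ ‖u‖ ↔
    ‖v‖ ^ 2 ≤ ‖u‖ ^ 2 - (2 * ε / (1 + ε)) * (‖u‖ ^ 2 + ⟪u, v⟫) := by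
  have h1 : (0:ℝ) < 1 + ε := by linarith
  have hexp : ‖ε • u + (1 + ε) • v‖ ^ 2
      = ε ^ 2 * ‖u‖ ^ 2 + 2 * (ε * (1 + ε)) * ⟪u, v⟫ + (1 + ε) ^ 2 * ‖v‖ ^ 2 := by
    rw [@norm_add_sq_real, real_inner_smul_left, real_inner_smul_right,
      norm_smul, norm_smul]
    simp [abs_of_pos hε, abs_of_pos h1]
    ring
  constructor
  · intro h
    have h2 : ‖ε • u + (1 + ε) • v‖ ^ 2 ≤ ‖u‖ ^ 2 :=
      pow_le_pow_left₀ (norm_nonneg _) h 2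
    rw [hexp] at h2
    rw [div_mul_eq_mul_div, sub_div' (ne_of_gt h1), le_div_iff₀ h1]
    nlinarith
  · intro h
    have h2 : ‖ε • u + (1 + ε) • v‖ ^ 2 ≤ ‖u‖ ^ 2 := by
      rw [hexp]
      rw [div_mul_eq_mul_div, sub_div' (ne_of_gt h1), le_div_iff₀ h1] at h
      nlinarith
    have := Real.sqrt_le_sqrt h2
    rwa [Real.sqrt_sq (norm_nonneg _), Real.sqrt_sq (norm_nonneg _)] at this

/-- `εId + (1+ε)R` is nonexpansive iff `R` is `2ε/(1+ε)` weakly contractive. -/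
theorem nonexpansive_iff_weaklyContractive (R : X → X) (ε : ℝ) (hε : 0 < ε) :
    (∀ x y : X, ‖(ε • x + (1 + ε) • R x) - (ε • y + (1 + ε) • R y)‖ ≤ ‖x - y‖) ↔
    (∀ x y : X, ‖R x - R y‖ ^ 2 ≤
      ‖x - y‖ ^ 2 - (2 * ε / (1 + ε)) * (‖x - y‖ ^ 2 + ⟪x - y, R x - R y⟫)) := by
  constructor
  · intro h x y
    apply (key_aux ε hε (x - y) (R x - R y)).mp
    have hx := h x y
    have heq : ε • x + (1 + ε) • R x - (ε • y + (1 + ε) • R y)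
        = ε • (x - y) + (1 + ε) • (R x - R y) := by
      simp [smul_sub]; abel
    rwa [heq] at hx
  · intro h x y
    have hk := (key_aux ε hε (x - y) (R x - R y)).mpr (h x y)
    have heq : ε • x + (1 + ε) • R x - (ε • y + (1 + ε) • R y)
        = ε • (x - y) + (1 + ε) • (R x - R y) := by
      simp [smul_sub]; abel
    rwa [heq]
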